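/- Let F be a field of characteristic 0, and let K be the 3-dimensional superalgebra with even part F·a and odd part spanned by ξ₁, ξ₂, with products a∘a = a, a∘ξᵢ = ξᵢ∘a = (1/2)ξᵢ, ξ₁∘ξ₂ = -ξ₂∘ξ₁ = a, ξᵢ∘ξᵢ = 0. Then K is simple (no ideals other than 0 and K, nonzero product) but has no unit element (there is no u ∈ K with u∘x = x for all x ∈ K). -/

import Mathlib

/-- The multiplication of the 3-dimensional Kaplansky superalgebra `K`, written in
the basis `a` (even), `ξ₁, ξ₂` (odd): an element `(x₁, x₂, x₃)` stands for
`x₁a + x₂ξ₁ + x₃ξ₂`, and the table is `a∘a = a`, `a∘ξᵢ = ξᵢ∘a = (1/2)ξᵢ`,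
`ξ₁∘ξ₂ = -ξ₂∘ξ₁ = a`, `ξᵢ∘ξᵢ = 0`. -/
def KMul {F : Type*} [Field F] : (F × F × F) → (F × F × F) → (F × F × F) :=
  fun x y =>
    (x.1 * y.1 + (x.2.1 * y.2.2 - x.2.2 * y.2.1),
     (2 : F)⁻¹ * (x.1 * y.2.1 + x.2.1 * y.1),
     (2 : F)⁻¹ * (x.1 * y.2.2 + x.2.2 * y.1))

/-- The 3-dimensional Kaplansky superalgebra `K` over a field of
characteristic 0 is simple (nonzero product, and no ideals other than `0` and `K`)
but has no unit element. -/
theorem Kaplansky_simple_nonunital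
    (F : Type*) [Field F] [CharZero F] :
    (∃ x y : F × F × F, KMul x y ≠ 0) ∧
    (∀ I : Submodule F (F × F × F),
      (∀ x : F × F × F, ∀ y ∈ I, KMul x y ∈ I ∧ KMul y x ∈ I) →
      I = ⊥ ∨ I = ⊤) ∧
    ¬ (∃ u : F × F × F, ∀ x : F × F × F, KMul u x = x) := by
  have h2 : (2 : F) ≠ 0 := two_ne_zero
  refine ⟨⟨(1,0,0), (1,0,0), by simp [KMul, Prod.ext_iff]⟩, ?_, ?_⟩
  · intro I hI
    by_cases hbot : I = ⊥
    · exact Or.inl hbot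
    right
    -- there is a nonzero element of I
    obtain ⟨v, hvI, hv0⟩ := Submodule.exists_mem_ne_zero_of_ne_bot hbot
    -- step 1 : a = (1,0,0) ∈ I
    have ha : ((1,0,0) : F × F × F) ∈ I := by
      -- (v.1, 0, 0) ∈ I
      have h1 : ((v.1, 0, 0) : F × F × F) ∈ I := by
        have hm := (hI (1,0,0) v hvI).1
        have : ((v.1, (2:F)⁻¹ * v.2.1, (2:F)⁻¹ * v.2.2) : F × F × F) ∈ I := by
          simpa [KMul] using hm
        have hsub := I.sub_mem (I.smul_mem (2:F) this) hvI
        have heq : ((2:F) • ((v.1, (2:F)⁻¹ * v.2.1, (2:F)⁻¹ * v.2.2) : F × F × F) - v)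
            = ((v.1, 0, 0) : F × F × F) := by
          refine Prod.ext ?_ (Prod.ext ?_ ?_) <;>
            simp [Prod.smul_def, smul_eq_mul, mul_inv_cancel_left₀ h2] <;> ring
        rwa [heq] at hsub
      rcases eq_or_ne v.1 0 with h1' | h1'
      · have hb : ((v.2.1, 0, 0) : F × F × F) ∈ I := by
          have := (hI (0,0,1) v hvI).2
          simpa [KMul, h1'] using this
        have hc : ((-v.2.2, 0, 0) : F × F × F) ∈ I := by
          have := (hI (0,1,0) v hvI).2
          simpa [KMul, h1'] using this
        rcases eq_or_ne v.2.1 0 with h2' | h2'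
        · have h3' : v.2.2 ≠ 0 := by
            intro h3'
            exact hv0 (Prod.ext h1' (Prod.ext h2' h3'))
          have := I.smul_mem (-v.2.2)⁻¹ hc
          simpa [Prod.smul_def, smul_eq_mul, inv_mul_cancel₀ (neg_ne_zero.mpr h3'), inv_mul_cancel₀ h3'] using this
        · have := I.smul_mem (v.2.1)⁻¹ hb
          simpa [Prod.smul_def, smul_eq_mul, inv_mul_cancel₀ h2'] using this
      · have := I.smul_mem (v.1)⁻¹ h1
        simpa [Prod.smul_def, smul_eq_mul, inv_mul_cancel₀ h1'] using this
    -- step 2 : ξ₁, ξ₂ ∈ I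
    have hx1 : ((0,1,0) : F × F × F) ∈ I := by
      have := (hI (0,1,0) (1,0,0) ha).1
      have h' : ((0, (2:F)⁻¹, 0) : F × F × F) ∈ I := by simpa [KMul] using this
      have := I.smul_mem (2:F) h'
      simpa [Prod.smul_def, smul_eq_mul, mul_inv_cancel₀ h2] using this
    have hx2 : ((0,0,1) : F × F × F) ∈ I := by
      have := (hI (0,0,1) (1,0,0) ha).1
      have h' : ((0, 0, (2:F)⁻¹) : F × F × F) ∈ I := by simpa [KMul] using this
      have := I.smul_mem (2:F) h'
      simpa [Prod.smul_def, smul_eq_mul, mul_inv_cancel₀ h2] using this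
    -- conclude
    rw [Submodule.eq_top_iff']
    intro x
    have : x = x.1 • ((1,0,0) : F × F × F) + x.2.1 • (0,1,0) + x.2.2 • (0,0,1) := by
      simp [Prod.ext_iff, Prod.smul_def, smul_eq_mul]
    rw [this]
    exact I.add_mem (I.add_mem (I.smul_mem _ ha) (I.smul_mem _ hx1)) (I.smul_mem _ hx2)
  · rintro ⟨u, hu⟩
    have h1 := hu (1,0,0)
    simp [KMul, Prod.ext_iff] at h1
    obtain ⟨hu1, hu2, hu3⟩ := h1
    have h2' := hu (0,1,0)
    simp [KMul, Prod.ext_iff, hu1, hu2, hu3] at h2'
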